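/- Let (G, +) be an abelian group with a 'mass' norm M and 'flat' functional F satisfying F(T) ≤ M(T), and suppose there are constants ε, ν > 0 such that every T with F(T) < ε admits a unique Q in a filling set with ∂Q = T and M(Q) ≤ ν F(T). Then for every continuous path Ψ : [0,1] → {cycles} (continuous in F) and every filling U_0 of Ψ(0), there is a unique continuous lift U : [0,1] → {fillings} with ∂U(t) = Ψ(t) and U(0) = U_0; it is constructed by subdividing [0,1] into intervals on which consecutive values of Ψ are F-distance less than ε apart and adding the small fillings of the differences. -/

import Mathlib

set_option maxHeartbeats 1000000


/-- Let `G` be an abelian group of "cycles" with mass norm `M_G` and flat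
functional `F` with `F(T) ≤ M_G(T)`, and let `∂ : W → G` be a boundary map from a group of
"fillings" with mass `M_W`, such that every `T` with `F(T) < ε` admits a unique filling
`Q` with `∂Q = T` and `M_W(Q) ≤ ν F(T)` (Federer–Fleming isoperimetric inequality plus
the Constancy Theorem, which also gives the mass gap `γ` for nonzero elements of
`ker ∂`).  Then every path `Ψ : [0,1] → G` continuous in `F`, together with a filling
`U0` of `Ψ(0)`, admits a lift `U : [0,1] → W` with `∂U(t) = Ψ(t)`, `U(0) = U0`,
continuous in the mass `M_W`; and such a continuous lift is unique.  (It is constructed by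
subdividing `[0,1]` into intervals on which consecutive values of `Ψ` are `F`-distance
less than `ε` apart and adding the small fillings of the differences.) -/
theorem stmt_16 {W G : Type*} [AddCommGroup W] [AddCommGroup G]
    (bd : W →+ G) (MW : W → ℝ) (MG FG : G → ℝ)
    (hMW0 : MW 0 = 0) (hMWnn : ∀ x, 0 ≤ MW x)
    (hMWadd : ∀ x y, MW (x + y) ≤ MW x + MW y) (hMWneg : ∀ x, MW (-x) = MW x)
    (hFnn : ∀ T, 0 ≤ FG T) (hF0 : FG 0 = 0)
    (hFadd : ∀ S T, FG (S + T) ≤ FG S + FG T) (hFneg : ∀ T, FG (-T) = FG T)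
    (hFM : ∀ T, FG T ≤ MG T)
    (ε ν γ : ℝ) (hε : 0 < ε) (hν : 0 < ν) (hγ : 0 < γ)
    (hfill : ∀ T : G, FG T < ε → ∃! Q : W, bd Q = T ∧ MW Q ≤ ν * FG T)
    (hgap : ∀ Q : W, bd Q = 0 → Q ≠ 0 → γ ≤ MW Q)
    (hsmall : 4 * ν * ε < γ)
    (Ψ : ℝ → G)
    (hΨ : ∀ t ∈ Set.Icc (0 : ℝ) 1, ∀ ε' > (0 : ℝ), ∃ δ > (0 : ℝ),
      ∀ s ∈ Set.Icc (0 : ℝ) 1, |s - t| < δ → FG (Ψ s - Ψ t) < ε')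
    (U0 : W) (hU0 : bd U0 = Ψ 0) :
    ∃ U : ℝ → W, U 0 = U0 ∧ (∀ t ∈ Set.Icc (0 : ℝ) 1, bd (U t) = Ψ t) ∧
      (∀ t ∈ Set.Icc (0 : ℝ) 1, ∀ ε' > (0 : ℝ), ∃ δ > (0 : ℝ),
        ∀ s ∈ Set.Icc (0 : ℝ) 1, |s - t| < δ → MW (U s - U t) < ε') ∧
      ∀ U' : ℝ → W, U' 0 = U0 → (∀ t ∈ Set.Icc (0 : ℝ) 1, bd (U' t) = Ψ t) →
        (∀ t ∈ Set.Icc (0 : ℝ) 1, ∀ ε' > (0 : ℝ), ∃ δ > (0 : ℝ),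
          ∀ s ∈ Set.Icc (0 : ℝ) 1, |s - t| < δ → MW (U' s - U' t) < ε') →
        ∀ t ∈ Set.Icc (0 : ℝ) 1, U' t = U t := by

  classical
  have h0I : (0:ℝ) ∈ Set.Icc (0:ℝ) 1 := by constructor <;> norm_num
  -- the small filling function
  have hqex : ∀ T : G, FG T < ε → ∃ Q : W, bd Q = T ∧ MW Q ≤ ν * FG T :=
    fun T h => (hfill T h).exists
  choose! q hqbd hqmass using hqex
  have huniq : ∀ T : G, FG T < ε → ∀ Q : W, bd Q = T → MW Q ≤ ν * FG T → Q = q T :=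
    fun T h Q h1 h2 => (hfill T h).unique ⟨h1, h2⟩ ⟨hqbd T h, hqmass T h⟩
  have hq0 : q (0 : G) = 0 := by
    have h0 : FG (0 : G) < ε := by rw [hF0]; exact hε
    exact (huniq 0 h0 0 (map_zero bd) (by rw [hF0, hMW0, mul_zero])).symm
  -- rigidity: any low-mass filling of a small cycle is THE small filling
  have hrig : ∀ T : G, FG T < ε → ∀ A : W, bd A = T → MW A ≤ 3 * ν * ε → A = q T := by
    intro T hT A hA hm
    have hsub : MW (A - q T) ≤ MW A + MW (q T) := by
      have h := hMWadd A (-(q T))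
      rw [hMWneg] at h
      simpa [sub_eq_add_neg] using h
    have hbd0 : bd (A - q T) = 0 := by rw [map_sub, hA, hqbd T hT, sub_self]
    by_contra hne
    have hne' : A - q T ≠ 0 := sub_ne_zero.mpr hne
    have hg := hgap _ hbd0 hne'
    have h1 : MW (q T) ≤ ν * FG T := hqmass T hT
    nlinarith [mul_lt_mul_of_pos_left hT hν]
  -- uniform continuity of Ψ
  have hδt : ∀ t ∈ Set.Icc (0:ℝ) 1, ∃ δ > (0:ℝ), ∀ s ∈ Set.Icc (0:ℝ) 1,
      |s - t| < δ → FG (Ψ s - Ψ t) < ε/4 := fun t ht => hΨ t ht (ε/4) (by positivity)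
  choose! d hd0 hd using hδt
  obtain ⟨u, huI, hufin, hucov⟩ := isCompact_Icc.elim_finite_subcover_image
    (b := Set.Icc (0:ℝ) 1) (c := fun t => Metric.ball t (d t / 2))
    (fun t _ => Metric.isOpen_ball)
    (fun x hx => Set.mem_biUnion hx (Metric.mem_ball_self (by linarith [hd0 x hx])))
  have hune : hufin.toFinset.Nonempty := by
    obtain ⟨t, htu, -⟩ := Set.mem_iUnion₂.mp (hucov h0I)
    exact ⟨t, hufin.mem_toFinset.mpr htu⟩
  set δ : ℝ := hufin.toFinset.inf' hune (fun t => d t / 2) with hδdef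
  have hδpos : 0 < δ := by
    rw [hδdef, Finset.lt_inf'_iff]
    intro t ht
    have := hd0 t (huI (hufin.mem_toFinset.mp ht))
    linarith
  have hunif : ∀ x ∈ Set.Icc (0:ℝ) 1, ∀ y ∈ Set.Icc (0:ℝ) 1, |x - y| < δ →
      FG (Ψ x - Ψ y) < ε/2 := by
    intro x hx y hy hxy
    obtain ⟨t, htu, hxt⟩ := Set.mem_iUnion₂.mp (hucov hx)
    have htI : t ∈ Set.Icc (0:ℝ) 1 := huI htu
    have hδle : δ ≤ d t / 2 := Finset.inf'_le _ (hufin.mem_toFinset.mpr htu)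
    have hxt2 : |x - t| < d t / 2 := by
      have := Metric.mem_ball.mp hxt
      rwa [Real.dist_eq] at this
    have hxt' : |x - t| < d t := by linarith [hd0 t htI]
    have hyt : |y - t| < d t := by
      have h1 : |y - t| ≤ |y - x| + |x - t| := abs_sub_le _ _ _
      have h2 : |y - x| = |x - y| := abs_sub_comm _ _
      linarith
    have h1 := hd t htI x hx hxt'
    have h2 := hd t htI y hy hyt
    have heq : Ψ x - Ψ y = (Ψ x - Ψ t) + -(Ψ y - Ψ t) := by abel
    calc FG (Ψ x - Ψ y) ≤ FG (Ψ x - Ψ t) + FG (-(Ψ y - Ψ t)) := by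
          rw [heq]; exact hFadd _ _
      _ = FG (Ψ x - Ψ t) + FG (Ψ y - Ψ t) := by rw [hFneg]
      _ < ε/2 := by linarith
  -- subdivision
  obtain ⟨n, hn⟩ := exists_nat_one_div_lt hδpos
  set N : ℕ := n + 1 with hNdef
  set Nr : ℝ := (N : ℝ) with hNrdef
  have hNr0 : (0:ℝ) < Nr := by
    rw [hNrdef, hNdef]; push_cast; positivity
  have hNδ : 1 / Nr < δ := by
    rw [hNrdef, hNdef]; push_cast; exact hn
  set p : ℕ → ℝ := fun i => (i : ℝ) / Nr with hpdef
  set fl : ℝ → ℕ := fun t => ⌊t * Nr⌋₊ with hfldef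
  have hp0 : p 0 = 0 := by simp [hpdef]
  have hpI : ∀ i : ℕ, i ≤ N → p i ∈ Set.Icc (0:ℝ) 1 := by
    intro i hi
    constructor
    · positivity
    · rw [hpdef, div_le_one hNr0, hNrdef]
      exact_mod_cast hi
  have hflN : ∀ t ∈ Set.Icc (0:ℝ) 1, fl t ≤ N := by
    intro t ht
    have h1 : t * Nr ≤ Nr := by nlinarith [ht.2]
    have h2 : fl t ≤ ⌊Nr⌋₊ := Nat.floor_le_floor h1
    rwa [hNrdef, Nat.floor_natCast] at h2
  have hfl_le : ∀ t ∈ Set.Icc (0:ℝ) 1, (fl t : ℝ) ≤ t * Nr := by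
    intro t ht
    exact Nat.floor_le (by nlinarith [ht.1])
  have hfl_lt : ∀ t : ℝ, t * Nr < (fl t : ℝ) + 1 := fun t => Nat.lt_floor_add_one _
  have hdistp : ∀ t ∈ Set.Icc (0:ℝ) 1, |t - p (fl t)| < 1 / Nr := by
    intro t ht
    have h1 := hfl_le t ht
    have h2 := hfl_lt t
    have h3 : 0 ≤ t - p (fl t) := by
      rw [hpdef, sub_nonneg, div_le_iff₀ hNr0]
      linarith
    rw [abs_of_nonneg h3, hpdef, sub_lt_iff_lt_add, ← add_div, lt_div_iff₀ hNr0]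
    linarith
  have hstepF : ∀ i : ℕ, i < N → FG (Ψ (p (i+1)) - Ψ (p i)) < ε/2 := by
    intro i hi
    apply hunif (p (i+1)) (hpI (i+1) hi) (p i) (hpI i (le_of_lt hi))
    have heq : p (i+1) - p i = 1 / Nr := by
      rw [hpdef]; push_cast; ring
    rw [heq, abs_of_pos (by positivity)]
    exact hNδ
  set V : ℕ → W := fun i => U0 + ∑ j ∈ Finset.range i, q (Ψ (p (j+1)) - Ψ (p j)) with hVdef
  have hVsucc : ∀ i : ℕ, V (i+1) = V i + q (Ψ (p (i+1)) - Ψ (p i)) := by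
    intro i
    rw [hVdef]
    simp [Finset.sum_range_succ]
    abel
  have hbdV : ∀ i : ℕ, i ≤ N → bd (V i) = Ψ (p i) := by
    intro i
    induction i with
    | zero => intro _; simpa [hVdef, hp0] using hU0
    | succ k ih =>
      intro hk
      have hkN : k < N := hk
      rw [hVsucc, map_add, ih (le_of_lt hkN),
        hqbd _ (by linarith [hstepF k hkN] : FG (Ψ (p (k+1)) - Ψ (p k)) < ε)]
      abel
  set U : ℝ → W := fun t => V (fl t) + q (Ψ t - Ψ (p (fl t))) with hUdef
  have hqtF : ∀ t ∈ Set.Icc (0:ℝ) 1, FG (Ψ t - Ψ (p (fl t))) < ε/2 := by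
    intro t ht
    exact hunif t ht (p (fl t)) (hpI _ (hflN t ht)) (lt_trans (hdistp t ht) hNδ)
  have hbdU : ∀ t ∈ Set.Icc (0:ℝ) 1, bd (U t) = Ψ t := by
    intro t ht
    rw [hUdef]
    simp only
    rw [map_add, hbdV _ (hflN t ht), hqbd _ (by linarith [hqtF t ht])]
    abel
  have hfl0 : fl 0 = 0 := by simp [hfldef]
  have hU0' : U 0 = U0 := by
    rw [hUdef]
    simp only [hfl0, hp0, sub_self, hq0]
    simp [hVdef]
  -- key claim: nearby values of U differ by the small filling
  have hkey : ∀ t ∈ Set.Icc (0:ℝ) 1, ∀ s ∈ Set.Icc (0:ℝ) 1, t ≤ s → s - t < 1 / Nr →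
      U s - U t = q (Ψ s - Ψ t) := by
    intro t ht s hs hts hst
    have hij : fl t ≤ fl s :=
      Nat.floor_le_floor (mul_le_mul_of_nonneg_right hts hNr0.le)
    have hji : fl s ≤ fl t + 1 := by
      have h1 : (fl s : ℝ) ≤ s * Nr := hfl_le s hs
      have h2 : t * Nr < (fl t : ℝ) + 1 := hfl_lt t
      have h3 : (s - t) * Nr < 1 := by
        rw [← lt_div_iff₀ hNr0]; exact hst
      have h4 : (fl s : ℝ) < (fl t : ℝ) + 2 := by nlinarith
      have h5 : fl s < fl t + 2 := by exact_mod_cast h4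
      omega
    have hFst : FG (Ψ s - Ψ t) < ε/2 :=
      hunif s hs t ht (by rw [abs_of_nonneg (by linarith)]; linarith)
    have hVji : MW (V (fl s) - V (fl t)) ≤ ν * (ε/2) := by
      rcases eq_or_lt_of_le hij with heq | hlt
      · rw [heq, sub_self, hMW0]; positivity
      · have heq1 : fl s = fl t + 1 := by omega
        have hltN : fl t < N := by
          have := hflN s hs; omega
        rw [heq1, hVsucc, add_sub_cancel_left]
        calc MW (q (Ψ (p (fl t + 1)) - Ψ (p (fl t))))
            ≤ ν * FG (Ψ (p (fl t + 1)) - Ψ (p (fl t))) :=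
              hqmass _ (by linarith [hstepF _ hltN])
          _ ≤ ν * (ε/2) :=
              mul_le_mul_of_nonneg_left (le_of_lt (hstepF _ hltN)) hν.le
    have hqsm : MW (q (Ψ s - Ψ (p (fl s)))) ≤ ν * (ε/2) :=
      le_trans (hqmass _ (by linarith [hqtF s hs]))
        (mul_le_mul_of_nonneg_left (le_of_lt (hqtF s hs)) hν.le)
    have hqtm : MW (q (Ψ t - Ψ (p (fl t)))) ≤ ν * (ε/2) :=
      le_trans (hqmass _ (by linarith [hqtF t ht]))
        (mul_le_mul_of_nonneg_left (le_of_lt (hqtF t ht)) hν.le)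
    have hAeq : U s - U t = (V (fl s) - V (fl t)) +
        (q (Ψ s - Ψ (p (fl s))) + -(q (Ψ t - Ψ (p (fl t))))) := by
      simp only [hUdef]; abel
    have hMA : MW (U s - U t) ≤ 3 * ν * ε := by
      have h1 := hMWadd (V (fl s) - V (fl t))
        (q (Ψ s - Ψ (p (fl s))) + -(q (Ψ t - Ψ (p (fl t)))))
      have h2 := hMWadd (q (Ψ s - Ψ (p (fl s)))) (-(q (Ψ t - Ψ (p (fl t)))))
      rw [hMWneg] at h2
      rw [hAeq]
      nlinarith [mul_nonneg hν.le hε.le]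
    have hbdA : bd (U s - U t) = Ψ s - Ψ t := by
      rw [map_sub, hbdU s hs, hbdU t ht]
    exact hrig _ (by linarith) _ hbdA hMA
  -- mass-continuity estimate
  have hMWdiff : ∀ t ∈ Set.Icc (0:ℝ) 1, ∀ s ∈ Set.Icc (0:ℝ) 1, |s - t| < 1 / Nr →
      MW (U s - U t) ≤ ν * FG (Ψ s - Ψ t) := by
    intro t ht s hs hst
    rcases le_total t s with h | h
    · have h1 : s - t < 1 / Nr := by
        rw [abs_of_nonneg (by linarith)] at hst; exact hst
      rw [hkey t ht s hs h h1]
      have hF : FG (Ψ s - Ψ t) < ε :=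
        lt_trans (hunif s hs t ht (lt_trans hst hNδ)) (by linarith)
      exact hqmass _ hF
    · have h1 : t - s < 1 / Nr := by
        rw [abs_sub_comm, abs_of_nonneg (by linarith)] at hst; exact hst
      have h2 : U s - U t = -(U t - U s) := by abel
      rw [h2, hMWneg, hkey s hs t ht h h1]
      have hF : FG (Ψ t - Ψ s) < ε := by
        have := hunif t ht s hs (by rw [abs_sub_comm] at hst; exact lt_trans hst hNδ)
        linarith
      have h3 : FG (Ψ t - Ψ s) = FG (Ψ s - Ψ t) := by
        rw [show Ψ t - Ψ s = -(Ψ s - Ψ t) by abel, hFneg]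
      rw [← h3]
      exact hqmass _ hF
  have hcont : ∀ t ∈ Set.Icc (0:ℝ) 1, ∀ ε' > (0:ℝ), ∃ δ' > (0:ℝ),
      ∀ s ∈ Set.Icc (0:ℝ) 1, |s - t| < δ' → MW (U s - U t) < ε' := by
    intro t ht ε' hε'
    obtain ⟨δ₁, hδ₁0, hδ₁⟩ := hΨ t ht (ε'/ν) (div_pos hε' hν)
    refine ⟨min δ₁ (1/Nr), lt_min hδ₁0 (by positivity), ?_⟩
    intro s hs hst
    have h1 : MW (U s - U t) ≤ ν * FG (Ψ s - Ψ t) :=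
      hMWdiff t ht s hs (lt_of_lt_of_le hst (min_le_right _ _))
    have h2 : FG (Ψ s - Ψ t) < ε'/ν := hδ₁ s hs (lt_of_lt_of_le hst (min_le_left _ _))
    have h3 : ν * FG (Ψ s - Ψ t) < ν * (ε'/ν) := mul_lt_mul_of_pos_left h2 hν
    have h4 : ν * (ε'/ν) = ε' := by field_simp
    linarith
  refine ⟨U, hU0', hbdU, hcont, ?_⟩
  -- uniqueness
  intro U' hU'0 hbdU' hcontU'
  have hDcont : ∀ c ∈ Set.Icc (0:ℝ) 1, ∃ δ' > (0:ℝ), ∀ s ∈ Set.Icc (0:ℝ) 1,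
      |s - c| < δ' → MW ((U' s - U s) - (U' c - U c)) < γ := by
    intro c hc
    obtain ⟨δa, hδa0, hδa⟩ := hcontU' c hc (γ/2) (by linarith)
    obtain ⟨δb, hδb0, hδb⟩ := hcont c hc (γ/2) (by linarith)
    refine ⟨min δa δb, lt_min hδa0 hδb0, ?_⟩
    intro s hs hsc
    have h1 := hδa s hs (lt_of_lt_of_le hsc (min_le_left _ _))
    have h2 := hδb s hs (lt_of_lt_of_le hsc (min_le_right _ _))
    have heq : (U' s - U s) - (U' c - U c) = (U' s - U' c) + -(U s - U c) := by abel
    have h3 := hMWadd (U' s - U' c) (-(U s - U c))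
    rw [hMWneg] at h3
    rw [heq]
    linarith
  have hDgap : ∀ c ∈ Set.Icc (0:ℝ) 1, MW (U' c - U c) < γ → U' c = U c := by
    intro c hc hm
    by_contra hne
    have hbd0 : bd (U' c - U c) = 0 := by
      rw [map_sub, hbdU' c hc, hbdU c hc, sub_self]
    have := hgap _ hbd0 (sub_ne_zero.mpr hne)
    linarith
  set S : Set ℝ := {t | t ∈ Set.Icc (0:ℝ) 1 ∧ ∀ s ∈ Set.Icc (0:ℝ) 1, s ≤ t → U' s = U s}
    with hSdef
  have h0S : (0:ℝ) ∈ S := by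
    refine ⟨h0I, fun s hs hs0 => ?_⟩
    have : s = 0 := le_antisymm hs0 hs.1
    rw [this, hU'0, hU0']
  have hSne : S.Nonempty := ⟨0, h0S⟩
  have hSbdd : BddAbove S := ⟨1, fun t ht => ht.1.2⟩
  set c := sSup S with hcdef
  have hc0 : 0 ≤ c := le_csSup hSbdd h0S
  have hc1 : c ≤ 1 := csSup_le hSne (fun t ht => ht.1.2)
  have hcI : c ∈ Set.Icc (0:ℝ) 1 := ⟨hc0, hc1⟩
  obtain ⟨δ', hδ'0, hδ'⟩ := hDcont c hcI
  obtain ⟨t0, ht0S, ht0⟩ := exists_lt_of_lt_csSup hSne (show c - δ' < c by linarith)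
  have ht0c : t0 ≤ c := le_csSup hSbdd ht0S
  have hDc : U' c = U c := by
    have ht0eq : U' t0 = U t0 := ht0S.2 t0 ht0S.1 le_rfl
    have h1 := hδ' t0 ht0S.1 (by rw [abs_of_nonpos (by linarith)]; rw [neg_sub]; linarith)
    rw [ht0eq, sub_self, zero_sub, hMWneg] at h1
    exact hDgap c hcI h1
  have hnear : ∀ s ∈ Set.Icc (0:ℝ) 1, |s - c| < δ' → U' s = U s := by
    intro s hs hsc
    have h1 := hδ' s hs hsc
    rw [hDc, sub_self, sub_zero] at h1
    exact hDgap s hs h1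
  have hcS : c ∈ S := by
    refine ⟨hcI, fun s hs hsc => ?_⟩
    rcases le_or_gt s t0 with h | h
    · exact ht0S.2 s hs h
    · exact hnear s hs (by rw [abs_of_nonpos (by linarith), neg_sub]; linarith)
  have hceq : c = 1 := by
    by_contra hne
    have hclt : c < 1 := lt_of_le_of_ne hc1 hne
    set s1 : ℝ := min 1 (c + δ'/2) with hs1def
    have hs1I : s1 ∈ Set.Icc (0:ℝ) 1 := by
      constructor
      · rw [hs1def]; exact le_min (by norm_num) (by linarith)
      · exact min_le_left _ _
    have hcs1 : c < s1 := lt_min hclt (by linarith)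
    have hs1c : s1 - c < δ' := by
      have : s1 ≤ c + δ'/2 := min_le_right _ _
      linarith
    have hs1S : s1 ∈ S := by
      refine ⟨hs1I, fun s hs hss1 => ?_⟩
      rcases le_or_gt s c with h | h
      · exact hcS.2 s hs h
      · exact hnear s hs (by rw [abs_of_nonneg (by linarith)]; linarith)
    have := le_csSup hSbdd hs1S
    linarith
  intro t ht
  exact hcS.2 t ht (by rw [hceq]; exact ht.2
)
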